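/- Let H be a digraph whose square H² dismantles to its diagonal Δ = {(u,u) : u ∈ V(H)}. Then there exists a sequence of homomorphisms P_0, …, P_n : H² → H with P_0 = π_1 (first projection), P_n = π_2 (second projection), and consecutive P_{t-1}, P_t adjacent in the exponential digraph H^{H²}. -/

import Mathlib

def Hom {α β : Type*} (E : α → α → Prop) (F : β → β → Prop) (f : α → β) : Prop :=
  ∀ u v, E u v → F (f u) (f v)

/-- The categorical square of a digraph: componentwise arcs. -/
def SqRel {α : Type*} (E : α → α → Prop) : α × α → α × α → Prop :=
  fun p q => E p.1 q.1 ∧ E p.2 q.2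

def Dominates {α : Type*} (E : α → α → Prop) (S : Set α) (y x : α) : Prop :=
  y ≠ x ∧ (E x x → E y y) ∧ ∀ z ∈ S, (E x z → E y z) ∧ (E z x → E z y)

inductive Dismantles {α : Type*} (E : α → α → Prop) : Set α → Set α → Prop
  | refl (S : Set α) : Dismantles E S S
  | step {S T : Set α} (x : α) (hx : x ∈ S)
      (hdom : ∃ y ∈ S, Dominates E S y x)
      (h : Dismantles E (S \ {x}) T) : Dismantles E S T

/-- Homomorphism on a sub-digraph. -/
def HomOn {α : Type*} (E : α → α → Prop) (S : Set α) (f : α → α) : Prop :=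
  ∀ a ∈ S, ∀ b ∈ S, E a b → E (f a) (f b)

/-- Adjacency in the exponential digraph, restricted to a sub-digraph. -/
def AdjOn {α : Type*} (E : α → α → Prop) (S : Set α) (f g : α → α) : Prop :=
  ∀ a ∈ S, ∀ b ∈ S, E a b → E (f a) (g b) ∧ E (g a) (f b)

lemma dismantle_chain {α : Type*} {E : α → α → Prop} {S T : Set α}
    (h : Dismantles E S T) :
    ∃ L : List (α → α), L ≠ [] ∧ L.head? = some id ∧
      (∀ f ∈ L, HomOn E S f ∧ Set.MapsTo f S S) ∧
      (∀ g ∈ L.getLast?, Set.MapsTo g S T) ∧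
      List.Chain' (AdjOn E S) L := by
  induction h with
  | refl S =>
    refine ⟨[id], by simp, rfl, ?_, ?_, by simp [List.Chain']⟩
    · intro f hf
      simp only [List.mem_singleton] at hf; subst hf
      exact ⟨fun a _ b _ hab => hab, fun a ha => ha⟩
    · intro g hg
      simp only [List.getLast?_singleton, Option.mem_def, Option.some.injEq] at hg
      subst hg; exact fun a ha => ha
  | @step S' T' x hx hdom hd ih =>
    classical
    obtain ⟨y, hyS, hne, hloop, hdz⟩ := hdom
    obtain ⟨L, hLne, hLhead, hLmem, hLlast, hLchain⟩ := ih
    set f : α → α := fun a => if a = x then y else a with hf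
    have hfMaps : Set.MapsTo f S' (S' \ {x}) := by
      intro a ha
      by_cases hax : a = x
      · refine Set.mem_diff_singleton.2 ⟨?_, ?_⟩ <;> simp [hf, hax, hyS, hne]
      · refine Set.mem_diff_singleton.2 ⟨?_, ?_⟩ <;> simp [hf, hax, ha]
    have hfHom : ∀ a ∈ S', ∀ b ∈ S', E a b → E (f a) (f b) := by
      intro a ha b hb hab
      by_cases hax : a = x <;> by_cases hbx : b = x
      · subst hax; subst hbx; simpa [hf] using hloop hab
      · subst hax; simpa [hf, hbx] using (hdz b hb).1 hab
      · subst hbx; simpa [hf, hax] using (hdz a ha).2 hab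
      · simpa [hf, hax, hbx] using hab
    have hAdj : ∀ a ∈ S', ∀ b ∈ S', E a b → E a (f b) ∧ E (f a) b := by
      intro a ha b hb hab
      constructor
      · by_cases hbx : b = x
        · subst hbx; simpa [hf] using (hdz a ha).2 hab
        · simpa [hf, hbx] using hab
      · by_cases hax : a = x
        · subst hax; simpa [hf] using (hdz b hb).1 hab
        · simpa [hf, hax] using hab
    refine ⟨id :: L.map (· ∘ f), by simp, rfl, ?_, ?_, ?_⟩
    · intro g hg
      rcases List.mem_cons.1 hg with hg | hg
      · subst hg; exact ⟨fun a _ b _ hab => hab, fun a ha => ha⟩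
      · obtain ⟨g', hg', rfl⟩ := List.mem_map.1 hg
        obtain ⟨hg'hom, hg'maps⟩ := hLmem g' hg'
        constructor
        · intro a ha b hb hab
          exact hg'hom _ (hfMaps ha) _ (hfMaps hb) (hfHom a ha b hb hab)
        · intro a ha
          exact (hg'maps (hfMaps ha)).1
    · intro g hg
      have hmne : L.map (· ∘ f) ≠ [] := by simpa using hLne
      obtain ⟨b, M, hbM⟩ := List.exists_cons_of_ne_nil hmne
      have hgl : L.getLast? = some (L.getLast hLne) := List.getLast?_eq_getLast hLne
      have : (id :: L.map (· ∘ f)).getLast? = some (L.getLast hLne ∘ f) := by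
        rw [hbM, List.getLast?_cons_cons, ← hbM, List.getLast?_map, hgl]
        rfl
      rw [this] at hg
      simp only [Option.mem_def, Option.some.injEq] at hg
      subst hg
      intro a ha
      exact hLlast (L.getLast hLne) (by rw [hgl]; rfl) (hfMaps ha)
    · rw [List.Chain', List.isChain_cons]
      constructor
      · intro b hb
        rw [List.head?_map, hLhead] at hb
        simp only [Option.map_some, Option.mem_def, Option.some.injEq] at hb
        subst hb
        intro a ha b hb hab
        exact ⟨(hAdj a ha b hb hab).1, (hAdj a ha b hb hab).2⟩
      · rw [List.isChain_map]
        refine (show List.IsChain _ L from hLchain).imp (fun g g' hgg' => ?_)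
        intro a ha b hb hab
        exact hgg' (f a) (hfMaps ha) (f b) (hfMaps hb) (hfHom a ha b hb hab)

/-- If `H²` dismantles to its diagonal, then there is a link of homomorphisms `H² → H`
from the first projection to the second projection, with consecutive maps adjacent in
the exponential digraph `H^(H²)`. -/
theorem stmt8 {V : Type*} [Fintype V] (E : V → V → Prop)
    (h : Dismantles (SqRel E) Set.univ {p : V × V | p.1 = p.2}) :
    ∃ (n : ℕ) (P : Fin (n + 1) → V × V → V),
      (∀ t, Hom (SqRel E) E (P t)) ∧
      P 0 = Prod.fst ∧
      P (Fin.last n) = Prod.snd ∧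
      ∀ t : Fin n, ∀ x y, SqRel E x y →
        E (P t.castSucc x) (P t.succ y) ∧ E (P t.succ x) (P t.castSucc y) := by
  classical
  obtain ⟨L, hLne, hLhead, hLmem, hLlast, hLchain⟩ := dismantle_chain h
  set Adj : (V × V → V) → (V × V → V) → Prop :=
    fun p q => ∀ x y, SqRel E x y → E (p x) (q y) ∧ E (q x) (p y) with hAdjdef
  set A : List (V × V → V) := L.map (fun g => Prod.fst ∘ g) with hA
  set B : List (V × V → V) := (L.map (fun g => Prod.snd ∘ g)).reverse with hB
  set M : List (V × V → V) := A ++ B with hM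
  have hAne : A ≠ [] := by simpa [hA] using hLne
  have hBne : B ≠ [] := by simpa [hB] using hLne
  have hMne : M ≠ [] := by simp [hM, hAne]
  set gl : (V × V) → (V × V) := L.getLast hLne with hgl
  have hglmem : L.getLast? = some gl := List.getLast?_eq_getLast hLne
  have hglhom := (hLmem gl (List.getLast_mem hLne)).1
  have hglT : Set.MapsTo gl Set.univ {p : V × V | p.1 = p.2} :=
    hLlast gl (by rw [hglmem]; rfl)
  -- every element of M is a homomorphism
  have hhomM : ∀ p ∈ M, Hom (SqRel E) E p := by
    intro p hp
    rw [hM, List.mem_append] at hp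
    rcases hp with hp | hp
    · obtain ⟨g, hg, rfl⟩ := List.mem_map.1 hp
      intro u v huv
      exact ((hLmem g hg).1 u trivial v trivial huv).1
    · rw [hB, List.mem_reverse] at hp
      obtain ⟨g, hg, rfl⟩ := List.mem_map.1 hp
      intro u v huv
      exact ((hLmem g hg).1 u trivial v trivial huv).2
  -- consecutive elements of M are adjacent
  have hchainM : List.Chain' Adj M := by
    rw [hM, List.Chain', List.isChain_append]
    refine ⟨?_, ?_, ?_⟩
    · rw [hA, List.isChain_map]
      refine (show List.IsChain _ L from hLchain).imp (fun g g' hgg' x y hxy => ?_)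
      exact ⟨(hgg' x trivial y trivial hxy).1.1, (hgg' x trivial y trivial hxy).2.1⟩
    · rw [hB, List.isChain_reverse, List.isChain_map]
      refine (show List.IsChain _ L from hLchain).imp (fun g g' hgg' x y hxy => ?_)
      exact ⟨(hgg' x trivial y trivial hxy).2.2, (hgg' x trivial y trivial hxy).1.2⟩
    · intro p hp q hq
      rw [hA, List.getLast?_map, hglmem] at hp
      rw [hB, List.head?_reverse, List.getLast?_map, hglmem] at hq
      simp only [Option.map_some, Option.mem_def, Option.some.injEq] at hp hq
      subst hp; subst hq
      intro x y hxy
      have h1 := hglhom x trivial y trivial hxy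
      have hx2 : (gl x).1 = (gl x).2 := hglT (Set.mem_univ x)
      have hy2 : (gl y).1 = (gl y).2 := hglT (Set.mem_univ y)
      constructor
      · show E (gl x).1 (gl y).2
        rw [← hy2]; exact h1.1
      · show E (gl x).2 (gl y).1
        rw [← hx2]; exact h1.1
  -- endpoints of M
  have hMhead : M.head? = some Prod.fst := by
    rw [hM, List.head?_append, hA, List.head?_map, hLhead]
    rfl
  have hMlast : M.getLast? = some Prod.snd := by
    rw [hM, List.getLast?_append, hB, List.getLast?_reverse, List.head?_map, hLhead]
    rfl
  obtain ⟨n, hn⟩ : ∃ n, M.length = n + 1 :=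
    ⟨M.length - 1, (Nat.succ_pred_eq_of_pos (List.length_pos_iff.2 hMne)).symm⟩
  refine ⟨n, fun t => M.get (Fin.cast hn.symm t), ?_, ?_, ?_, ?_⟩
  · intro t
    exact hhomM _ (List.get_mem M _)
  · have h1 : M.head? = some (M.head hMne) := List.head?_eq_head hMne
    rw [hMhead] at h1
    have h2 : M.get (Fin.cast hn.symm 0) = M.head hMne := by
      have he : (Fin.cast hn.symm (0 : Fin (n + 1))) = ⟨0, by omega⟩ := rfl
      rw [he, List.get_mk_zero]
    show M.get (Fin.cast hn.symm 0) = Prod.fst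
    rw [h2, ← Option.some_injective _ h1]
  · have h1 : M.getLast? = some (M.getLast hMne) := List.getLast?_eq_getLast hMne
    rw [hMlast] at h1
    have h2 : M.get (Fin.cast hn.symm (Fin.last n)) = M.getLast hMne := by
      rw [List.getLast_eq_getElem, List.get_eq_getElem]
      congr 1
      simp [hn]
    show M.get (Fin.cast hn.symm (Fin.last n)) = Prod.snd
    rw [h2, ← Option.some_injective _ h1]
  · intro t x y hxy
    rw [List.Chain', List.isChain_iff_getElem] at hchainM
    have ht : (t : ℕ) + 1 < M.length := by omega
    exact hchainM t.1 ht x y hxy
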